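/- Let M be Hermitian positive definite and w a unit vector. Then the operator norm of the oblique projector P = (w w* M)/(w* M w) satisfies ‖P‖ = ‖M w‖/(w* M w) ≤ (κ+1)/(2√κ), where κ = λ_max(M)/λ_min(M). -/

import Mathlib

open Matrix
open scoped ComplexOrder

noncomputable section

/-- Euclidean norm of a complex vector. -/
def en {ι : Type*} [Fintype ι] (v : ι → ℂ) : ℝ := Real.sqrt (∑ i, ‖v i‖ ^ 2)

lemma en_nonneg {ι : Type*} [Fintype ι] (v : ι → ℂ) : 0 ≤ en v := Real.sqrt_nonneg _

lemma en_sq {ι : Type*} [Fintype ι] (v : ι → ℂ) : en v ^ 2 = ∑ i, ‖v i‖ ^ 2 := by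
  rw [en, Real.sq_sqrt]; positivity

lemma en_eq_norm {n : ℕ} (v : Fin n → ℂ) :
    en v = ‖(WithLp.equiv 2 (Fin n → ℂ)).symm v‖ := by
  rw [EuclideanSpace.norm_eq]; rfl

lemma re_star_dot {n : ℕ} (v : Fin n → ℂ) : (star v ⬝ᵥ v).re = ∑ i, ‖v i‖ ^ 2 := by
  rw [dotProduct, Complex.re_sum]
  refine Finset.sum_congr rfl fun i _ => ?_
  rw [Pi.star_apply, RCLike.star_def, mul_comm, Complex.mul_conj]
  simp [Complex.sq_norm]

lemma vecMulVec_mulVec' {n : ℕ} (a b x : Fin n → ℂ) :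
    (Matrix.vecMulVec a b) *ᵥ x = (b ⬝ᵥ x) • a := by
  funext i
  simp only [mulVec, vecMulVec_apply, dotProduct, Pi.smul_apply, smul_eq_mul, Finset.sum_mul]
  exact Finset.sum_congr rfl fun j _ => by ring

lemma star_dot_self {n : ℕ} (v : Fin n → ℂ) :
    star v ⬝ᵥ v = ((∑ i, ‖v i‖ ^ 2 : ℝ) : ℂ) := by
  rw [dotProduct]
  push_cast
  refine Finset.sum_congr rfl fun i _ => ?_
  rw [Pi.star_apply, RCLike.star_def, mul_comm, Complex.mul_conj, Complex.normSq_eq_norm_sq]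
  simp

theorem stmt13 {n : ℕ} (M : Matrix (Fin n) (Fin n) ℂ) (hM : M.PosDef)
    (w : Fin n → ℂ) (hw : en w = 1)
    (κ : ℝ) (hκ : κ = (⨆ i, hM.1.eigenvalues i) / (⨅ i, hM.1.eigenvalues i))
    (P : Matrix (Fin n) (Fin n) ℂ)
    (hP : P = (star w ⬝ᵥ M.mulVec w)⁻¹ • (Matrix.vecMulVec w (star w) * M)) :
    ‖Matrix.toEuclideanCLM (𝕜 := ℂ) P‖ = en (M.mulVec w) / (star w ⬝ᵥ M.mulVec w).re ∧
      en (M.mulVec w) / (star w ⬝ᵥ M.mulVec w).re ≤ (κ + 1) / (2 * Real.sqrt κ) := by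
  have hn : Nonempty (Fin n) := by
    rcases Nat.eq_zero_or_pos n with h | h
    · subst h; simp [en] at hw
    · exact ⟨⟨0, h⟩⟩
  have hw0 : w ≠ 0 := by
    intro h; rw [h] at hw; simp [en] at hw
  set c : ℂ := star w ⬝ᵥ M.mulVec w with hc
  have hcpos : 0 < c := hM.dotProduct_mulVec_pos hw0
  have hcre : 0 < c.re := (Complex.lt_def.mp hcpos).1
  have hcim : c.im = 0 := ((Complex.lt_def.mp hcpos).2).symm
  have hcr : (c.re : ℂ) = c := Complex.ext rfl (by simp [hcim])
  have hcne : c ≠ 0 := ne_of_gt hcpos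
  have hMw : star w ᵥ* M = star (M.mulVec w) := by
    rw [Matrix.star_mulVec, hM.1.eq]
  -- absolute value of c
  have hnormc : ‖c‖ = c.re := by
    rw [← hcr]; simp [Complex.norm_real, abs_of_pos hcre]
  -- sum of squares of w
  have hwsum : ∑ i, ‖w i‖ ^ 2 = 1 := by
    have := en_sq w; rw [hw] at this; linarith
  -- Part 1: the norm computation
  have part1 : ‖Matrix.toEuclideanCLM (𝕜 := ℂ) P‖ = en (M.mulVec w) / c.re := by
    set u : EuclideanSpace ℂ (Fin n) := (WithLp.equiv 2 (Fin n → ℂ)).symm w with hu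
    set v : EuclideanSpace ℂ (Fin n) :=
      (WithLp.equiv 2 (Fin n → ℂ)).symm ((star c)⁻¹ • M.mulVec w) with hv
    have hT : Matrix.toEuclideanCLM (𝕜 := ℂ) P = (innerSL ℂ v).smulRight u := by
      apply ContinuousLinearMap.ext
      intro x
      apply (WithLp.equiv 2 (Fin n → ℂ)).injective
      rw [WithLp.equiv_apply, Matrix.ofLp_toEuclideanCLM, hP,
        Matrix.smul_mulVec, ← Matrix.mulVec_mulVec, vecMulVec_mulVec',
        Matrix.dotProduct_mulVec, hMw]
      simp only [ContinuousLinearMap.smulRight_apply, innerSL_apply_apply,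
        EuclideanSpace.inner_eq_star_dotProduct, hv, hu, Equiv.apply_symm_apply,
        star_smul, smul_dotProduct, star_inv₀, star_star, smul_smul, smul_eq_mul]
      simp only [WithLp.equiv_apply, WithLp.equiv_symm_apply, WithLp.ofLp_smul, WithLp.ofLp_toLp,
        star_smul, star_inv₀, star_star, dotProduct_smul, smul_eq_mul]
      rw [dotProduct_comm]
    have hvnorm : ‖v‖ = (c.re)⁻¹ * en (M.mulVec w) := by
      rw [hv, WithLp.equiv_symm_apply, WithLp.toLp_smul, norm_smul, ← WithLp.equiv_symm_apply, ← en_eq_norm]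
      simp [norm_inv, norm_star, hnormc]
    have hunorm : ‖u‖ = 1 := by rw [hu, ← en_eq_norm, hw]
    rw [hT, ContinuousLinearMap.norm_smulRight_apply, innerSL_apply_norm, hvnorm, hunorm]
    field_simp
  refine ⟨part1, ?_⟩
  classical
  set lam : Fin n → ℝ := hM.1.eigenvalues with hlam
  set L : ℝ := ⨆ i, lam i with hLdef
  set m : ℝ := ⨅ i, lam i with hmdef
  have hlam_pos : ∀ i, 0 < lam i := hM.eigenvalues_pos
  have hmle : ∀ i, m ≤ lam i := fun i => ciInf_le (Finite.bddBelow_range _) i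
  have hleL : ∀ i, lam i ≤ L := fun i => le_ciSup (Finite.bddAbove_range _) i
  have hmpos : 0 < m := by
    obtain ⟨i, hi⟩ := exists_eq_ciInf_of_finite (f := lam)
    rw [hmdef, ← hi]; exact hlam_pos i
  have hLpos : 0 < L :=
    lt_of_lt_of_le hmpos (le_trans (hmle (Classical.arbitrary _)) (hleL _))
  set U : Matrix (Fin n) (Fin n) ℂ := (hM.1.eigenvectorUnitary : Matrix (Fin n) (Fin n) ℂ)
    with hUdef
  have hU1 : U * star U = 1 := (Matrix.mem_unitaryGroup_iff).mp (hM.1.eigenvectorUnitary).2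
  have hU2 : star U * U = 1 := (Matrix.mem_unitaryGroup_iff').mp (hM.1.eigenvectorUnitary).2
  set D : Matrix (Fin n) (Fin n) ℂ := Matrix.diagonal (RCLike.ofReal ∘ lam) with hD
  have hspec : M = U * D * star U := hM.1.spectral_theorem
  set d : Fin n → ℂ := fun i => (((L - lam i) * (lam i - m) : ℝ) : ℂ) with hd
  have hdiagPSD : (Matrix.diagonal d).PosSemidef := by
    refine Matrix.posSemidef_diagonal_iff.mpr fun i => ?_
    rw [hd]
    rw [Complex.zero_le_real]
    nlinarith [hmle i, hleL i]
  have hA : (U * Matrix.diagonal d * star U).PosSemidef := by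
    have := hdiagPSD.mul_mul_conjTranspose_same U
    rwa [← Matrix.star_eq_conjTranspose] at this
  have hMM : M * M = U * (D * D) * star U := by
    rw [hspec]
    have h1 : (U * D * star U) * (U * D * star U)
        = U * (D * ((star U * U) * (D * star U))) := by
      simp only [mul_assoc]
    rw [h1, hU2, one_mul]
    simp only [mul_assoc]
  have hAeq : U * Matrix.diagonal d * star U
      = ((m + L : ℝ) : ℂ) • M - M * M - ((m * L : ℝ) : ℂ) • 1 := by
    have hdiag : Matrix.diagonal d
        = ((m + L : ℝ) : ℂ) • D - D * D - ((m * L : ℝ) : ℂ) • 1 := by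
      rw [hD, Matrix.diagonal_mul_diagonal, ← Matrix.diagonal_one,
        ← Matrix.diagonal_smul, ← Matrix.diagonal_smul, Matrix.diagonal_sub,
        Matrix.diagonal_sub]
      rw [Matrix.diagonal_eq_diagonal_iff]
      intro i
      have hco : (RCLike.ofReal : ℝ → ℂ) = Complex.ofReal := rfl
      simp only [hco, hd, Pi.smul_apply, Pi.sub_apply, Function.comp_apply, smul_eq_mul,
        Pi.one_apply, mul_one]
      push_cast
      ring
    rw [hMM, hspec, ← hU1, hdiag, mul_sub, mul_sub, sub_mul, sub_mul,
      mul_smul_comm, mul_smul_comm, smul_mul_assoc, smul_mul_assoc, mul_one]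
  have hquad := hA.dotProduct_mulVec_nonneg w
  rw [hAeq] at hquad
  have hexp : star w ⬝ᵥ (((((m + L : ℝ) : ℂ) • M - M * M - ((m * L : ℝ) : ℂ) • 1)) *ᵥ w)
      = ((m + L : ℝ) : ℂ) * c - star (M *ᵥ w) ⬝ᵥ (M *ᵥ w) - ((m * L : ℝ) : ℂ) := by
    rw [Matrix.sub_mulVec, Matrix.sub_mulVec, Matrix.smul_mulVec,
      Matrix.smul_mulVec, Matrix.one_mulVec, dotProduct_sub, dotProduct_sub,
      dotProduct_smul, dotProduct_smul, ← hc, ← Matrix.mulVec_mulVec,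
      Matrix.dotProduct_mulVec (star w) M (M *ᵥ w), hMw]
    rw [star_dot_self w, hwsum]
    simp only [smul_eq_mul, mul_one]
    push_cast
    ring
  have hre : 0 ≤ (m + L) * c.re - en (M.mulVec w) ^ 2 - m * L := by
    have h0 : 0 ≤ (star w ⬝ᵥ (((((m + L : ℝ) : ℂ) • M - M * M
        - ((m * L : ℝ) : ℂ) • 1)) *ᵥ w)).re := (Complex.le_def.mp hquad).1
    rw [hexp, star_dot_self] at h0
    simpa [Complex.sub_re, Complex.re_ofReal_mul, Complex.ofReal_re, en_sq,
      ← Complex.ofReal_pow] using h0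
  have EA : en (M.mulVec w) ^ 2 ≤ (m + L) * c.re - m * L := by linarith
  set e := en (M.mulVec w) with he
  have hen : 0 ≤ e := en_nonneg _
  have hsk : Real.sqrt κ = Real.sqrt L / Real.sqrt m := by
    rw [hκ, Real.sqrt_div hLpos.le]
  set sm : ℝ := Real.sqrt m with hsmdef
  set sl : ℝ := Real.sqrt L with hsldef
  have hsm : 0 < sm := Real.sqrt_pos.mpr hmpos
  have hsl : 0 < sl := Real.sqrt_pos.mpr hLpos
  have hsm2 : sm ^ 2 = m := Real.sq_sqrt hmpos.le
  have hsl2 : sl ^ 2 = L := Real.sq_sqrt hLpos.le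
  have hRHS : (κ + 1) / (2 * Real.sqrt κ) = (L + m) / (2 * sl * sm) := by
    rw [hsk, hκ]
    rw [← hsm2, ← hsl2]
    field_simp
  rw [hRHS, div_le_div_iff₀ hcre (by positivity)]
  apply le_of_pow_le_pow_left₀ two_ne_zero (by positivity)
  have key : (e * (2 * sl * sm)) ^ 2 = 4 * e ^ 2 * L * m := by
    rw [← hsl2, ← hsm2]; ring
  rw [key]
  have h1 : 4 * L * m * (e ^ 2) ≤ 4 * L * m * ((m + L) * c.re - m * L) :=
    mul_le_mul_of_nonneg_left EA (by positivity)
  nlinarith [h1, sq_nonneg ((m + L) * c.re - 2 * m * L)]
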